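/- Let V(x) = -(3/2)/cosh(x/2)² and k > 0. Testing with the zero mode: ⟨φ₁, H_k φ₁⟩ = k² ‖φ₁‖², where φ₁(x) = (1/4) sech(x/2)², H_k = -∂ₓ² + k² + 1 + V. Consequently the minimax value inf_u ⟨u, H_k u⟩/⟨u, G_k u⟩ is at most k²‖φ₁‖²/⟨φ₁, G_k φ₁⟩, which is bounded by C k³ for small k and some constant C. -/

import Mathlib

open MeasureTheory Real Set Filter

namespace Stmt8Aux

noncomputable def phi (x : ℝ) : ℝ := 1 / (4 * Real.cosh (x / 2) ^ 2)

lemma myexp_abs_le (x : ℝ) : Real.exp |x| ≤ 4 * Real.cosh (x / 2) ^ 2 := by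
  have key : Real.exp |x / 2| ≤ 2 * Real.cosh (x / 2) := by
    rw [Real.cosh_eq]
    rcases abs_cases (x / 2) with ⟨h, _⟩ | ⟨h, _⟩ <;> rw [h] <;>
      nlinarith [Real.exp_pos (x / 2), Real.exp_pos (-(x / 2))]
  have h2 : Real.exp |x| = Real.exp |x / 2| * Real.exp |x / 2| := by
    rw [← Real.exp_add]
    congr 1
    rw [abs_div]
    norm_num
  rw [h2]
  nlinarith [Real.exp_pos |x / 2|, Real.cosh_pos (x / 2)]

lemma intexp : Integrable (fun x : ℝ => Real.exp (-|x|)) := by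
  have h1 : IntegrableOn (fun x : ℝ => Real.exp (-|x|)) (Ioi 0) := by
    have h := exp_neg_integrableOn_Ioi 0 (b := 1) one_pos
    refine h.congr_fun (fun x hx => ?_) measurableSet_Ioi
    rw [abs_of_pos hx]; ring_nf
  have h2 : IntegrableOn (fun x : ℝ => Real.exp (-|x|)) (Iic 0) := by
    have A : MeasurableEmbedding fun x : ℝ => -x := (Homeomorph.neg ℝ).measurableEmbedding
    have : IntegrableOn (fun x : ℝ => Real.exp (-|x|)) (Iic 0)
        (Measure.map (fun x : ℝ => -x) volume) := by
      rw [A.integrableOn_map_iff]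
      simp_rw [Function.comp_def, abs_neg, neg_preimage, neg_Iic, neg_zero]
      exact (integrableOn_Ici_iff_integrableOn_Ioi).mpr h1
    rwa [Measure.map_neg_eq_self (volume : Measure ℝ)] at this
  have h3 := h2.union h1
  rwa [Iic_union_Ioi, integrableOn_univ] at h3


lemma inv_sq_le (x : ℝ) : (Real.cosh (x / 2) ^ 2)⁻¹ ≤ 4 * Real.exp (-|x|) := by
  have h := myexp_abs_le x
  have h1 : (0:ℝ) < Real.exp |x| := Real.exp_pos _
  have h2 : (0:ℝ) < Real.cosh (x / 2) ^ 2 := by positivity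
  rw [Real.exp_neg]
  calc (Real.cosh (x / 2) ^ 2)⁻¹ = 4 * (1 / (4 * Real.cosh (x / 2) ^ 2)) := by ring
    _ ≤ 4 * (1 / Real.exp |x|) := by gcongr
    _ = 4 * (Real.exp |x|)⁻¹ := by rw [one_div]

lemma integrable_of_le_inv_cosh_sq {f : ℝ → ℝ} (hf : Continuous f) {M : ℝ}
    (h : ∀ x, |f x| ≤ M / Real.cosh (x / 2) ^ 2) : Integrable f := by
  refine (intexp.const_mul (4 * M)).mono' hf.aestronglyMeasurable (ae_of_all _ fun x => ?_)
  have h2 : (0:ℝ) < Real.cosh (x / 2) ^ 2 := by positivity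
  have hM : 0 ≤ M := by
    have h4 := (abs_nonneg (f 0)).trans (h 0)
    have h3 : (0:ℝ) < Real.cosh ((0:ℝ) / 2) ^ 2 := by positivity
    have h5 := mul_nonneg h4 h3.le
    rwa [div_mul_cancel₀ _ (ne_of_gt h3)] at h5
  calc ‖f x‖ = |f x| := rfl
    _ ≤ M / Real.cosh (x / 2) ^ 2 := h x
    _ = M * (Real.cosh (x / 2) ^ 2)⁻¹ := by rw [div_eq_mul_inv]
    _ ≤ M * (4 * Real.exp (-|x|)) := mul_le_mul_of_nonneg_left (inv_sq_le x) hM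
    _ = 4 * M * Real.exp (-|x|) := by ring

lemma hderiv_half (x : ℝ) : HasDerivAt (fun y : ℝ => y / 2) (1 / 2 : ℝ) x := by
  simpa using (hasDerivAt_id x).div_const 2

lemma hc_deriv (x : ℝ) :
    HasDerivAt (fun y : ℝ => Real.cosh (y / 2)) (Real.sinh (x / 2) * (1 / 2)) x :=
  (Real.hasDerivAt_cosh (x / 2)).comp (h₂ := Real.cosh) x (hderiv_half x)

lemma hs_deriv (x : ℝ) :
    HasDerivAt (fun y : ℝ => Real.sinh (y / 2)) (Real.cosh (x / 2) * (1 / 2)) x :=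
  (Real.hasDerivAt_sinh (x / 2)).comp (h₂ := Real.sinh) x (hderiv_half x)

lemma phi_hasDeriv (x : ℝ) :
    HasDerivAt (fun y : ℝ => 1 / (4 * Real.cosh (y / 2) ^ 2))
      (-Real.sinh (x / 2) / (4 * Real.cosh (x / 2) ^ 3)) x := by
  have hc := Real.cosh_pos (x / 2)
  have hv : HasDerivAt (fun y : ℝ => 4 * Real.cosh (y / 2) ^ 2)
      (4 * ((2 : ℕ) * Real.cosh (x / 2) ^ 1 * (Real.sinh (x / 2) * (1 / 2)))) x :=
    ((hc_deriv x).pow 2).const_mul 4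
  have := (hasDerivAt_const x (1:ℝ)).fun_div hv (by positivity)
  refine this.congr_deriv ?_
  field_simp
  ring

lemma G_hasDeriv (x : ℝ) :
    HasDerivAt (fun y : ℝ => -(Real.sinh (y / 2) / (16 * Real.cosh (y / 2) ^ 5)))
      ((4 * Real.cosh (x / 2) ^ 2 - 5) / (32 * Real.cosh (x / 2) ^ 6)) x := by
  have hc := Real.cosh_pos (x / 2)
  have hsq := Real.cosh_sq_sub_sinh_sq (x / 2)
  have hv : HasDerivAt (fun y : ℝ => 16 * Real.cosh (y / 2) ^ 5)
      (16 * ((5 : ℕ) * Real.cosh (x / 2) ^ 4 * (Real.sinh (x / 2) * (1 / 2)))) x :=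
    ((hc_deriv x).pow 5).const_mul 16
  have := ((hs_deriv x).fun_div hv (by positivity)).neg
  refine this.congr_deriv ?_
  have hs2 : Real.sinh (x / 2) ^ 2 = Real.cosh (x / 2) ^ 2 - 1 := by linarith
  field_simp
  linear_combination 160 * hs2


lemma hcC : Continuous (fun x : ℝ => Real.cosh (x / 2)) :=
  Real.continuous_cosh.comp (continuous_id.div_const 2)

lemma hsC : Continuous (fun x : ℝ => Real.sinh (x / 2)) :=
  Real.continuous_sinh.comp (continuous_id.div_const 2)

lemma abs_sinh_le (x : ℝ) : |Real.sinh (x / 2)| ≤ Real.cosh (x / 2) := by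
  have h := Real.cosh_sq_sub_sinh_sq (x / 2)
  have hc := Real.cosh_pos (x / 2)
  rw [abs_le]
  constructor <;> nlinarith [sq_nonneg (Real.sinh (x / 2) + Real.cosh (x / 2)),
    sq_nonneg (Real.sinh (x / 2) - Real.cosh (x / 2))]

lemma phiI : Integrable (fun x : ℝ => 1 / (4 * Real.cosh (x / 2) ^ 2)) := by
  refine integrable_of_le_inv_cosh_sq (M := 1)
    (continuous_const.div (continuous_const.mul (hcC.pow 2)) (fun x => by positivity)) fun x => ?_
  have hc := Real.cosh_pos (x / 2)
  rw [abs_of_pos (by positivity)]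
  rw [div_le_div_iff₀ (by positivity) (by positivity)]
  nlinarith

lemma phi2I : Integrable (fun x : ℝ => (1 / (4 * Real.cosh (x / 2) ^ 2)) ^ 2) := by
  refine integrable_of_le_inv_cosh_sq (M := 1)
    ((continuous_const.div (continuous_const.mul (hcC.pow 2)) (fun x => (by positivity : 4 * Real.cosh (x / 2) ^ 2 ≠ 0))).pow 2)
    fun x => ?_
  have hc := Real.cosh_pos (x / 2)
  have hc1 := Real.one_le_cosh (x / 2)
  rw [abs_of_pos (by positivity)]
  have hc2 : 1 ≤ Real.cosh (x / 2) ^ 2 := by nlinarith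
  rw [div_pow, one_pow, div_le_div_iff₀ (by positivity) (by positivity)]
  nlinarith

lemma GI : Integrable (fun x : ℝ => -(Real.sinh (x / 2) / (16 * Real.cosh (x / 2) ^ 5))) := by
  refine integrable_of_le_inv_cosh_sq (M := 1)
    ((hsC.div (continuous_const.mul (hcC.pow 5)) (fun x => (by positivity : 16 * Real.cosh (x / 2) ^ 5 ≠ 0))).neg) fun x => ?_
  have hc := Real.cosh_pos (x / 2)
  have hc1 := Real.one_le_cosh (x / 2)
  have hs := abs_sinh_le x
  have hc2 : 1 ≤ Real.cosh (x / 2) ^ 2 := by nlinarith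
  rw [abs_neg, abs_div,
    abs_of_pos (show (0:ℝ) < 16 * Real.cosh (x / 2) ^ 5 by positivity)]
  rw [div_le_div_iff₀ (by positivity) (by positivity)]
  have h3 : |Real.sinh (x / 2)| * Real.cosh (x / 2) ^ 2 ≤ Real.cosh (x / 2) ^ 3 := by
    nlinarith [sq_nonneg (Real.cosh (x / 2))]
  have h5 : Real.cosh (x / 2) ^ 3 ≤ Real.cosh (x / 2) ^ 5 :=
    pow_le_pow_right₀ hc1 (by norm_num)
  nlinarith [pow_pos hc 5]

lemma GdI : Integrable (fun x : ℝ =>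
    (4 * Real.cosh (x / 2) ^ 2 - 5) / (32 * Real.cosh (x / 2) ^ 6)) := by
  refine integrable_of_le_inv_cosh_sq (M := 1)
    (((continuous_const.mul (hcC.pow 2)).sub continuous_const).div
      (continuous_const.mul (hcC.pow 6)) (fun x => by positivity)) fun x => ?_
  have hc := Real.cosh_pos (x / 2)
  have hc1 := Real.one_le_cosh (x / 2)
  have habs : |4 * Real.cosh (x / 2) ^ 2 - 5| ≤ 4 * Real.cosh (x / 2) ^ 2 + 5 := by
    rw [abs_le]; constructor <;> nlinarith
  have hc2 : 1 ≤ Real.cosh (x / 2) ^ 2 := by nlinarith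
  rw [abs_div,
    abs_of_pos (show (0:ℝ) < 32 * Real.cosh (x / 2) ^ 6 by positivity)]
  rw [div_le_div_iff₀ (by positivity) (by positivity)]
  have h3 : |4 * Real.cosh (x / 2) ^ 2 - 5| * Real.cosh (x / 2) ^ 2
      ≤ (4 * Real.cosh (x / 2) ^ 2 + 5) * Real.cosh (x / 2) ^ 2 :=
    mul_le_mul_of_nonneg_right habs (sq_nonneg _)
  have h4 : Real.cosh (x / 2) ^ 4 ≤ Real.cosh (x / 2) ^ 6 :=
    pow_le_pow_right₀ hc1 (by norm_num)
  have h2' : Real.cosh (x / 2) ^ 2 ≤ Real.cosh (x / 2) ^ 6 :=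
    pow_le_pow_right₀ hc1 (by norm_num)
  nlinarith [pow_pos hc 6]

lemma part1 (k : ℝ) :
    (∫ x : ℝ, ((deriv (fun y : ℝ => 1 / (4 * (Real.cosh (y / 2)) ^ 2)) x) ^ 2
          + (k ^ 2 + 1 + (-(3 / 2) / (Real.cosh (x / 2)) ^ 2))
            * (1 / (4 * (Real.cosh (x / 2)) ^ 2)) ^ 2))
        = k ^ 2 * ∫ x : ℝ, (1 / (4 * (Real.cosh (x / 2)) ^ 2)) ^ 2 := by
  have key : (fun x : ℝ => ((deriv (fun y : ℝ => 1 / (4 * (Real.cosh (y / 2)) ^ 2)) x) ^ 2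
          + (k ^ 2 + 1 + (-(3 / 2) / (Real.cosh (x / 2)) ^ 2))
            * (1 / (4 * (Real.cosh (x / 2)) ^ 2)) ^ 2))
      = fun x : ℝ => (4 * Real.cosh (x / 2) ^ 2 - 5) / (32 * Real.cosh (x / 2) ^ 6)
          + k ^ 2 * (1 / (4 * Real.cosh (x / 2) ^ 2)) ^ 2 := by
    funext x
    rw [(phi_hasDeriv x).deriv]
    have hc := Real.cosh_pos (x / 2)
    have hs2 : Real.sinh (x / 2) ^ 2 = Real.cosh (x / 2) ^ 2 - 1 := by
      have := Real.cosh_sq_sub_sinh_sq (x / 2); linarith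
    field_simp
    linear_combination 64 * hs2
  rw [key, integral_add GdI ((phi2I).const_mul _), integral_const_mul,
    MeasureTheory.integral_eq_zero_of_hasDerivAt_of_integrable G_hasDeriv GdI GI, zero_add]


lemma hcC' : Continuous (fun x : ℝ => Real.cosh (x / 2)) :=
  Real.continuous_cosh.comp (continuous_id.div_const 2)

lemma phiC : Continuous (fun x : ℝ => 1 / (4 * Real.cosh (x / 2) ^ 2)) :=
  continuous_const.div (continuous_const.mul (hcC'.pow 2)) (fun x => by positivity)

lemma phi_pos (x : ℝ) : 0 < 1 / (4 * Real.cosh (x / 2) ^ 2) := by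
  have := Real.cosh_pos (x / 2); positivity

lemma int_pos {f : ℝ → ℝ} (hf : Integrable f) (hpos : ∀ x, 0 < f x) : 0 < ∫ x, f x := by
  rw [integral_pos_iff_support_of_nonneg (fun x => (hpos x).le) hf]
  have h : Function.support f = Set.univ := Set.eq_univ_iff_forall.mpr fun x => (hpos x).ne'
  rw [h, Real.volume_univ]
  exact ENNReal.zero_lt_top

noncomputable def J (x : ℝ) : ℝ := ∫ y, Real.exp (-|x - y|) * (1 / (4 * Real.cosh (y / 2) ^ 2))

lemma Jint (x : ℝ) : Integrable (fun y => Real.exp (-|x - y|) * (1 / (4 * Real.cosh (y / 2) ^ 2))) := by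
  refine phiI.mono' ?_ (ae_of_all _ fun y => ?_)
  · exact ((Real.continuous_exp.comp ((continuous_const.sub continuous_id).abs.neg)).mul phiC).aestronglyMeasurable
  · have h1 : Real.exp (-|x - y|) ≤ 1 := Real.exp_le_one_iff.mpr (neg_nonpos.mpr (abs_nonneg _))
    have h2 := phi_pos y
    rw [Real.norm_eq_abs, abs_of_pos (by positivity)]
    nlinarith [Real.exp_pos (-|x - y|)]

lemma Jpos (x : ℝ) : 0 < J x :=
  int_pos (Jint x) fun y => by positivity

lemma Jnonneg (x : ℝ) : 0 ≤ J x := (Jpos x).le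

lemma Jmeas : AEStronglyMeasurable J volume := by
  have hc : Continuous fun p : ℝ × ℝ => Real.exp (-|p.1 - p.2|) * (1 / (4 * Real.cosh (p.2 / 2) ^ 2)) := by
    refine (Real.continuous_exp.comp ((continuous_fst.sub continuous_snd).abs.neg)).mul ?_
    exact continuous_const.div
      (continuous_const.mul ((hcC'.comp continuous_snd).pow 2)) (fun p => by positivity)
  exact (hc.stronglyMeasurable.integral_prod_right').aestronglyMeasurable


noncomputable def Aphi : ℝ := ∫ x, 1 / (4 * Real.cosh (x / 2) ^ 2)

lemma Jle (x : ℝ) : J x ≤ Aphi := by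
  refine integral_mono (Jint x) phiI fun y => ?_
  have h1 : Real.exp (-|x - y|) ≤ 1 := Real.exp_le_one_iff.mpr (neg_nonpos.mpr (abs_nonneg _))
  nlinarith [phi_pos y, Real.exp_pos (-|x - y|)]

lemma phiJ_int : Integrable (fun x => (1 / (4 * Real.cosh (x / 2) ^ 2)) * J x) := by
  refine (phiI.const_mul Aphi).mono'
    (phiC.aestronglyMeasurable.mul Jmeas) (ae_of_all _ fun x => ?_)
  rw [Real.norm_eq_abs, abs_of_nonneg (mul_nonneg (phi_pos x).le (Jnonneg x))]
  calc (1 / (4 * Real.cosh (x / 2) ^ 2)) * J x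
      ≤ (1 / (4 * Real.cosh (x / 2) ^ 2)) * Aphi := by
        exact mul_le_mul_of_nonneg_left (Jle x) (phi_pos x).le
    _ = Aphi * (1 / (4 * Real.cosh (x / 2) ^ 2)) := by ring

noncomputable def B : ℝ := ∫ x, (1 / (4 * Real.cosh (x / 2) ^ 2)) * J x

lemma Bpos : 0 < B :=
  int_pos phiJ_int fun x => mul_pos (phi_pos x) (Jpos x)

noncomputable def D (k x : ℝ) : ℝ :=
  ∫ y, Real.exp (-(k * |x - y|)) / (2 * k) * (1 / (4 * Real.cosh (y / 2) ^ 2))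

variable {k : ℝ}

lemma DkInt (hk : 0 < k) (x : ℝ) :
    Integrable (fun y => Real.exp (-(k * |x - y|)) / (2 * k) * (1 / (4 * Real.cosh (y / 2) ^ 2))) := by
  refine (phiI.const_mul ((2 * k)⁻¹)).mono' ?_ (ae_of_all _ fun y => ?_)
  · refine (((Real.continuous_exp.comp
      ((continuous_const.mul (continuous_const.sub continuous_id).abs).neg)).div_const (2 * k)).mul phiC).aestronglyMeasurable
  · have h1 : Real.exp (-(k * |x - y|)) ≤ 1 :=
      Real.exp_le_one_iff.mpr (neg_nonpos.mpr (by positivity))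
    have h2 := phi_pos y
    have hkp : (0:ℝ) < 2 * k := by positivity
    rw [Real.norm_eq_abs, abs_of_nonneg (by positivity)]
    have h3 : Real.exp (-(k * |x - y|)) / (2 * k) ≤ (2 * k)⁻¹ := by
      rw [div_le_iff₀ hkp, inv_mul_cancel₀ (ne_of_gt hkp)]
      exact h1
    exact mul_le_mul_of_nonneg_right h3 h2.le

lemma Dk_nonneg (hk : 0 < k) (x : ℝ) : 0 ≤ D k x :=
  integral_nonneg fun y => by positivity

lemma Dk_ge (hk : 0 < k) (hk1 : k ≤ 1) (x : ℝ) : J x / (2 * k) ≤ D k x := by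
  have h1 : J x / (2 * k)
      = ∫ y, (Real.exp (-|x - y|) * (1 / (4 * Real.cosh (y / 2) ^ 2))) / (2 * k) := by
    rw [J, integral_div]
  rw [h1]
  refine integral_mono ((Jint x).div_const _) (DkInt hk x) fun y => ?_
  have he : Real.exp (-|x - y|) ≤ Real.exp (-(k * |x - y|)) := by
    apply Real.exp_le_exp.mpr
    have := abs_nonneg (x - y)
    nlinarith
  have h2 := phi_pos y
  have hkp : (0:ℝ) < 2 * k := by positivity
  calc Real.exp (-|x - y|) * (1 / (4 * Real.cosh (y / 2) ^ 2)) / (2 * k)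
      = Real.exp (-|x - y|) / (2 * k) * (1 / (4 * Real.cosh (y / 2) ^ 2)) := by ring
    _ ≤ Real.exp (-(k * |x - y|)) / (2 * k) * (1 / (4 * Real.cosh (y / 2) ^ 2)) := by
        gcongr

lemma Dk_meas (hk : 0 < k) : AEStronglyMeasurable (fun x => D k x) volume := by
  have hc : Continuous fun p : ℝ × ℝ =>
      Real.exp (-(k * |p.1 - p.2|)) / (2 * k) * (1 / (4 * Real.cosh (p.2 / 2) ^ 2)) := by
    refine ((Real.continuous_exp.comp
      ((continuous_const.mul (continuous_fst.sub continuous_snd).abs).neg)).div_const (2 * k)).mul ?_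
    exact continuous_const.div
      (continuous_const.mul ((hcC'.comp continuous_snd).pow 2)) (fun p => by positivity)
  exact (hc.stronglyMeasurable.integral_prod_right').aestronglyMeasurable

lemma Dk_le (hk : 0 < k) (x : ℝ) : D k x ≤ (2 * k)⁻¹ * Aphi := by
  have h1 : (2 * k)⁻¹ * Aphi = ∫ y, (2 * k)⁻¹ * (1 / (4 * Real.cosh (y / 2) ^ 2)) := by
    rw [Aphi, integral_const_mul]
  rw [h1]
  refine integral_mono (DkInt hk x) (phiI.const_mul _) fun y => ?_
  have h1 : Real.exp (-(k * |x - y|)) ≤ 1 :=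
    Real.exp_le_one_iff.mpr (neg_nonpos.mpr (by positivity))
  have h2 := phi_pos y
  have hkp : (0:ℝ) < 2 * k := by positivity
  have h3 : Real.exp (-(k * |x - y|)) / (2 * k) ≤ (2 * k)⁻¹ := by
    rw [div_le_iff₀ hkp, inv_mul_cancel₀ (ne_of_gt hkp)]
    exact h1
  exact mul_le_mul_of_nonneg_right h3 h2.le

lemma phiDk_int (hk : 0 < k) :
    Integrable (fun x => (1 / (4 * Real.cosh (x / 2) ^ 2)) * D k x) := by
  refine (phiI.const_mul ((2 * k)⁻¹ * Aphi)).mono'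
    (phiC.aestronglyMeasurable.mul (Dk_meas hk)) (ae_of_all _ fun x => ?_)
  rw [Real.norm_eq_abs, abs_of_nonneg (mul_nonneg (phi_pos x).le (Dk_nonneg hk x))]
  calc (1 / (4 * Real.cosh (x / 2) ^ 2)) * D k x
      ≤ (1 / (4 * Real.cosh (x / 2) ^ 2)) * ((2 * k)⁻¹ * Aphi) :=
        mul_le_mul_of_nonneg_left (Dk_le hk x) (phi_pos x).le
    _ = (2 * k)⁻¹ * Aphi * (1 / (4 * Real.cosh (x / 2) ^ 2)) := by ring

lemma DkB (hk : 0 < k) (hk1 : k ≤ 1) :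
    B / (2 * k) ≤ ∫ x, (1 / (4 * Real.cosh (x / 2) ^ 2)) * D k x := by
  have h1 : B / (2 * k)
      = ∫ x, ((1 / (4 * Real.cosh (x / 2) ^ 2)) * J x) / (2 * k) := by
    rw [B, integral_div]
  rw [h1]
  refine integral_mono (phiJ_int.div_const _) (phiDk_int hk) fun x => ?_
  have h2 := phi_pos x
  calc (1 / (4 * Real.cosh (x / 2) ^ 2)) * J x / (2 * k)
      = (1 / (4 * Real.cosh (x / 2) ^ 2)) * (J x / (2 * k)) := by ring
    _ ≤ (1 / (4 * Real.cosh (x / 2) ^ 2)) * D k x :=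
        mul_le_mul_of_nonneg_left (Dk_ge hk hk1 x) h2.le

end Stmt8Aux

open Stmt8Aux

/-- Testing with the zero mode φ₁(x) = (1/4) sech(x/2)²:
    ⟨φ₁, H_k φ₁⟩ = k² ‖φ₁‖², and the quotient k²‖φ₁‖²/⟨φ₁, G_k φ₁⟩ is ≤ C k³
    for small k. -/
theorem stmt_8 :
    (∀ k : ℝ, 0 < k →
      (∫ x : ℝ, ((deriv (fun y : ℝ => 1 / (4 * (Real.cosh (y / 2)) ^ 2)) x) ^ 2
          + (k ^ 2 + 1 + (-(3 / 2) / (Real.cosh (x / 2)) ^ 2))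
            * (1 / (4 * (Real.cosh (x / 2)) ^ 2)) ^ 2))
        = k ^ 2 * ∫ x : ℝ, (1 / (4 * (Real.cosh (x / 2)) ^ 2)) ^ 2) ∧
    (∃ C : ℝ, 0 < C ∧ ∀ k : ℝ, 0 < k → k ≤ 1 →
      (k ^ 2 * ∫ x : ℝ, (1 / (4 * (Real.cosh (x / 2)) ^ 2)) ^ 2)
        / (∫ x : ℝ, (1 / (4 * (Real.cosh (x / 2)) ^ 2))
            * ∫ y : ℝ, (Real.exp (-(k * |x - y|)) / (2 * k))
                * (1 / (4 * (Real.cosh (y / 2)) ^ 2)))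
        ≤ C * k ^ 3) := by
  constructor
  · intro k _
    exact part1 k
  · have hA2 : 0 < ∫ x : ℝ, (1 / (4 * (Real.cosh (x / 2)) ^ 2)) ^ 2 :=
      int_pos phi2I fun x => pow_pos (phi_pos x) 2
    set A2 : ℝ := ∫ x : ℝ, (1 / (4 * (Real.cosh (x / 2)) ^ 2)) ^ 2 with hA2def
    refine ⟨2 * A2 / B, div_pos (by linarith) Bpos, ?_⟩
    intro k hk hk1
    have hD := DkB (k := k) hk hk1
    have hDpos : 0 < ∫ x, (1 / (4 * Real.cosh (x / 2) ^ 2)) * D k x :=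
      lt_of_lt_of_le (div_pos Bpos (by positivity)) hD
    show k ^ 2 * A2 / (∫ x, (1 / (4 * Real.cosh (x / 2) ^ 2)) * D k x) ≤ 2 * A2 / B * k ^ 3
    rw [div_le_iff₀ hDpos]
    have hC : (0:ℝ) < 2 * A2 / B := div_pos (by linarith) Bpos
    have h5 : 2 * A2 / B * k ^ 3 * (B / (2 * k))
        ≤ 2 * A2 / B * k ^ 3 * ∫ x, (1 / (4 * Real.cosh (x / 2) ^ 2)) * D k x :=
      mul_le_mul_of_nonneg_left hD (by positivity)
    have heq : 2 * A2 / B * k ^ 3 * (B / (2 * k)) = k ^ 2 * A2 := by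
      have hBne : B ≠ 0 := ne_of_gt Bpos
      have hkne : k ≠ 0 := ne_of_gt hk
      field_simp
    linarith
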